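/- arXiv:1303.6491 — 3 statements merged into one kernel-verified Lean document; each statement's English description precedes it below -/
import Mathlib

section
/- For every constructible special point data R = ((ℓ_1,…,ℓ_d),(u_1,…,u_{d+1})) of level d with q nodes, the d+1 tuples u_1, …, u_{d+1} ∈ {1,2}^d are pairwise distinct, and for every ℓ ∈ {1,…,q} the relation <_ℓ (taken relative to the node labels of R) is a strict total order on the set {u_1,…,u_{d+1}}: it is irreflexive and transitive on this set, and any two distinct elements of it are comparable. -/
/-- The relation `u <_ℓ u'` on `{1,2}^d`, relative to node labels `lab : Fin d → ℕ`. -/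
def ltNode {d : ℕ} (lab : Fin d → ℕ) (ℓ : ℕ) (u u' : Fin d → ℕ) : Prop :=
  (∃ k₀ : Fin d, lab k₀ = ℓ ∧ u k₀ = 2 ∧ u' k₀ = 1 ∧
      ∀ k : Fin d, k₀ < k → lab k = ℓ → u k = u' k) ∨
  ((∀ k : Fin d, lab k = ℓ → u k = u' k) ∧
    ∃ k₀ : Fin d, lab k₀ ≠ ℓ ∧ u k₀ = 1 ∧ u' k₀ = 2 ∧
      ∀ k : Fin d, k < k₀ → u k = u' k)

/-- Constructible special point data of level `d` with `q` nodes. -/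
inductive Constructible (q : ℕ) :
    (d : ℕ) → (Fin d → ℕ) → (Fin (d + 1) → Fin d → ℕ) → Prop
  | base (ℓ : ℕ) (h1 : 1 ≤ ℓ) (hq : ℓ ≤ q) :
      Constructible q 1 (fun _ => ℓ) ![![1], ![2]]
  | step {d : ℕ} {lab : Fin d → ℕ} {u : Fin (d + 1) → Fin d → ℕ}
      (hR : Constructible q d lab u) (ℓ : ℕ) (h1 : 1 ≤ ℓ) (hq : ℓ ≤ q)
      (v : Fin (d + 1) → Fin d → ℕ) (σ : Equiv.Perm (Fin (d + 1)))
      (hv : ∀ j, v j = u (σ j))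
      (hsort : ∀ i j : Fin (d + 1), i < j → ltNode lab ℓ (v i) (v j))
      (h : ℕ) (hh1 : 1 ≤ h) (hh2 : h ≤ d + 1) :
      Constructible q (d + 1) (Fin.snoc lab ℓ)
        (fun j : Fin (d + 2) =>
          if hj : (j : ℕ) < h then Fin.snoc (v ⟨(j : ℕ), by omega⟩) 1
          else Fin.snoc (v ⟨(j : ℕ) - 1, by omega⟩) 2)

/-- `a^ℓ_u(R)`: the number of `k` with `ℓ_k = ℓ` and `u(k) = 2`. -/
def aCount {d : ℕ} (lab : Fin d → ℕ) (ℓ : ℕ) (u : Fin d → ℕ) : ℕ :=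
  (Finset.univ.filter (fun k : Fin d => lab k = ℓ ∧ u k = 2)).card

/-- `|a_u(R)|`: the number of `k` with `u(k) = 2`. -/
def aTot {d : ℕ} (u : Fin d → ℕ) : ℕ :=
  (Finset.univ.filter (fun k : Fin d => u k = 2)).card

/-- Lexicographic order on tuples, comparing at the smallest coordinate where they differ. -/
def lexLt {d : ℕ} (u u' : Fin d → ℕ) : Prop :=
  ∃ k₀ : Fin d, (∀ k : Fin d, k < k₀ → u k = u' k) ∧ u k₀ < u' k₀

lemma ltNode_irrefl' {d : ℕ} (lab : Fin d → ℕ) (ℓ : ℕ) (u : Fin d → ℕ) :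
    ¬ ltNode lab ℓ u u := by
  rintro (⟨k₀, _, h2, h1, _⟩ | ⟨_, k₀, _, h1, h2, _⟩) <;> omega

lemma ltNode_trans' {d : ℕ} (lab : Fin d → ℕ) (ℓ : ℕ) {u v w : Fin d → ℕ}
    (h1 : ltNode lab ℓ u v) (h2 : ltNode lab ℓ v w) : ltNode lab ℓ u w := by
  rcases h1 with ⟨k₁, hl1, hu1, hv1, ha1⟩ | ⟨he1, k₁, hl1, hu1, hv1, ha1⟩ <;>
  rcases h2 with ⟨k₂, hl2, hv2, hw2, ha2⟩ | ⟨he2, k₂, hl2, hv2, hw2, ha2⟩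
  · rcases lt_trichotomy k₁ k₂ with hlt | heq | hlt
    · exact Or.inl ⟨k₂, hl2, by rw [ha1 k₂ hlt hl2]; exact hv2, hw2,
        fun k hk hkl => (ha1 k (hlt.trans hk) hkl).trans (ha2 k hk hkl)⟩
    · subst heq; omega
    · exact Or.inl ⟨k₁, hl1, hu1, by rw [← ha2 k₁ hlt hl1]; exact hv1,
        fun k hk hkl => (ha1 k hk hkl).trans (ha2 k (hlt.trans hk) hkl)⟩
  · exact Or.inl ⟨k₁, hl1, hu1, by rw [← he2 k₁ hl1]; exact hv1,
      fun k hk hkl => (ha1 k hk hkl).trans (he2 k hkl)⟩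
  · exact Or.inl ⟨k₂, hl2, by rw [he1 k₂ hl2]; exact hv2, hw2,
      fun k hk hkl => (he1 k hkl).trans (ha2 k hk hkl)⟩
  · refine Or.inr ⟨fun k hk => (he1 k hk).trans (he2 k hk), ?_⟩
    rcases lt_trichotomy k₁ k₂ with hlt | heq | hlt
    · exact ⟨k₁, hl1, hu1, by rw [← ha2 k₁ hlt]; exact hv1,
        fun k hk => (ha1 k hk).trans (ha2 k (hk.trans hlt))⟩
    · subst heq; omega
    · exact ⟨k₂, hl2, by rw [ha1 k₂ hlt]; exact hv2, hw2,
        fun k hk => (ha1 k (hk.trans hlt)).trans (ha2 k hk)⟩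

lemma ltNode_total' {d : ℕ} (lab : Fin d → ℕ) (ℓ : ℕ) {u v : Fin d → ℕ}
    (hu : ∀ k, u k = 1 ∨ u k = 2) (hv : ∀ k, v k = 1 ∨ v k = 2)
    (hne : u ≠ v) : ltNode lab ℓ u v ∨ ltNode lab ℓ v u := by
  classical
  by_cases hS : ∃ k, lab k = ℓ ∧ u k ≠ v k
  · set S : Finset (Fin d) := Finset.univ.filter (fun k => lab k = ℓ ∧ u k ≠ v k) with hSdef
    have hSne : S.Nonempty := by
      obtain ⟨k, hk1, hk2⟩ := hS
      exact ⟨k, by simp [hSdef, hk1, hk2]⟩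
    set k₀ := S.max' hSne with hk₀def
    have hmem : k₀ ∈ S := S.max'_mem hSne
    have hk₀l : lab k₀ = ℓ := by simpa [hSdef] using (Finset.mem_filter.mp hmem).2.1
    have hk₀ne : u k₀ ≠ v k₀ := (Finset.mem_filter.mp hmem).2.2
    have hafter : ∀ k : Fin d, k₀ < k → lab k = ℓ → u k = v k := by
      intro k hk hkl
      by_contra hc
      have : k ∈ S := Finset.mem_filter.mpr ⟨Finset.mem_univ _, hkl, hc⟩
      exact absurd (S.le_max' k this) (not_le.mpr hk)
    rcases hu k₀ with h1 | h1 <;> rcases hv k₀ with h2 | h2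
    · omega
    · exact Or.inr (Or.inl ⟨k₀, hk₀l, h2, h1, fun k hk hkl => (hafter k hk hkl).symm⟩)
    · exact Or.inl (Or.inl ⟨k₀, hk₀l, h1, h2, hafter⟩)
    · omega
  · push_neg at hS
    set T : Finset (Fin d) := Finset.univ.filter (fun k => u k ≠ v k) with hTdef
    have hTne : T.Nonempty := by
      by_contra hc
      apply hne
      funext k
      by_contra hk
      exact hc ⟨k, Finset.mem_filter.mpr ⟨Finset.mem_univ _, hk⟩⟩
    set k₀ := T.min' hTne with hk₀def
    have hmem : k₀ ∈ T := T.min'_mem hTne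
    have hk₀ne : u k₀ ≠ v k₀ := (Finset.mem_filter.mp hmem).2
    have hk₀l : lab k₀ ≠ ℓ := fun hl => hk₀ne (hS k₀ hl)
    have hbefore : ∀ k : Fin d, k < k₀ → u k = v k := by
      intro k hk
      by_contra hc
      have : k ∈ T := Finset.mem_filter.mpr ⟨Finset.mem_univ _, hc⟩
      exact absurd (T.min'_le k this) (not_le.mpr hk)
    rcases hu k₀ with h1 | h1 <;> rcases hv k₀ with h2 | h2
    · omega
    · exact Or.inl (Or.inr ⟨hS, k₀, hk₀l, h1, h2, hbefore⟩)
    · exact Or.inr (Or.inr ⟨fun k hk => (hS k hk).symm, k₀, hk₀l, h2, h1,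
        fun k hk => (hbefore k hk).symm⟩)
    · omega

lemma constructible_values {q d : ℕ} {lab : Fin d → ℕ} {u : Fin (d + 1) → Fin d → ℕ}
    (hR : Constructible q d lab u) : ∀ j k, u j k = 1 ∨ u j k = 2 := by
  induction hR with
  | base ℓ h1 hq => intro j k; fin_cases j <;> fin_cases k <;> simp
  | step hR ℓ h1 hq v σ hv hsort h hh1 hh2 ih =>
    intro j k
    by_cases hj : (j : ℕ) < h <;>
      simp only [hj, dif_pos, dif_neg, not_false_iff] <;>
      induction k using Fin.lastCases with
      | last => simp
      | cast k => simp only [Fin.snoc_castSucc, hv]; exact ih _ _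

lemma constructible_inj {q d : ℕ} {lab : Fin d → ℕ} {u : Fin (d + 1) → Fin d → ℕ}
    (hR : Constructible q d lab u) : Function.Injective u := by
  induction hR with
  | base ℓ h1 hq =>
    intro j j' hjj
    fin_cases j <;> fin_cases j' <;> first
      | rfl
      | (exfalso; have := congrFun hjj 0; simp at this)
  | step hR ℓ h1 hq v σ hv hsort h hh1 hh2 ih =>
    have hvinj : Function.Injective v := by
      intro i i' hii
      apply σ.injective
      apply ih
      rw [← hv, ← hv]
      exact hii
    intro j j' heq
    have hlast := congrFun heq (Fin.last _)
    by_cases hj : (j : ℕ) < h <;> by_cases hj' : (j' : ℕ) < h <;>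
      simp only [hj, hj', dif_pos, dif_neg, not_false_iff, Fin.snoc_last] at heq hlast
    · have hvv : v ⟨(j : ℕ), by omega⟩ = v ⟨(j' : ℕ), by omega⟩ := by
        funext k
        have := congrFun heq k.castSucc
        simpa [Fin.snoc_castSucc] using this
      have := hvinj hvv
      have : (j : ℕ) = (j' : ℕ) := by simpa [Fin.mk.injEq] using congrArg Fin.val this
      exact Fin.ext this
    · omega
    · omega
    · have hvv : v ⟨(j : ℕ) - 1, by omega⟩ = v ⟨(j' : ℕ) - 1, by omega⟩ := by
        funext k
        have := congrFun heq k.castSucc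
        simpa [Fin.snoc_castSucc] using this
      have := hvinj hvv
      have : (j : ℕ) - 1 = (j' : ℕ) - 1 := by
        simpa [Fin.mk.injEq] using congrArg Fin.val this
      exact Fin.ext (by omega)

/-- For every constructible special point data `R = ((ℓ_1,…,ℓ_d),(u_1,…,u_{d+1}))` of level
`d` with `q` nodes, the tuples `u_1, …, u_{d+1}` are pairwise distinct, and for every node
label `ℓ ∈ {1,…,q}` the relation `<_ℓ` is a strict total order on `{u_1,…,u_{d+1}}`. -/
theorem constructible_ltNode_strict_total_order {q d : ℕ} (hq : 1 ≤ q) (hd : 1 ≤ d)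
    {lab : Fin d → ℕ} {u : Fin (d + 1) → Fin d → ℕ}
    (hR : Constructible q d lab u) (ℓ : ℕ) (hℓ1 : 1 ≤ ℓ) (hℓq : ℓ ≤ q) :
    Function.Injective u ∧
    (∀ j : Fin (d + 1), ¬ ltNode lab ℓ (u j) (u j)) ∧
    (∀ j₁ j₂ j₃ : Fin (d + 1), ltNode lab ℓ (u j₁) (u j₂) →
      ltNode lab ℓ (u j₂) (u j₃) → ltNode lab ℓ (u j₁) (u j₃)) ∧
    (∀ j₁ j₂ : Fin (d + 1), u j₁ ≠ u j₂ →
      ltNode lab ℓ (u j₁) (u j₂) ∨ ltNode lab ℓ (u j₂) (u j₁)) := by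
  refine ⟨constructible_inj hR, fun j => ltNode_irrefl' lab ℓ (u j),
    fun j₁ j₂ j₃ h1 h2 => ltNode_trans' lab ℓ h1 h2, fun j₁ j₂ hne => ?_⟩
  exact ltNode_total' lab ℓ (constructible_values hR j₁) (constructible_values hR j₂) hne
end

section
/- Let R = ((ℓ_1,…,ℓ_d),(u_1,…,u_{d+1})) be a constructible special point data of level d with q nodes and let ℓ ∈ {1,…,q}. Let σ be the permutation of {1,…,d+1} such that u_{σ(1)}, …, u_{σ(d+1)} is in increasing lexicographic order, and let τ be the permutation such that u_{τ(1)}, …, u_{τ(d+1)} is increasing for the relation <_ℓ relative to the node labels of R. Then τ is a cyclic shift of σ: there exists h₀ ∈ {0,…,d} such that τ(i) = σ(1 + ((i + h₀ − 1) mod (d+1))) for all i = 1,…,d+1. -/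
lemma digit_sum_lt {d M : ℕ} (f : Fin d → ℕ) (hf : ∀ k, f k ≤ M) :
    (∑ k, f k * (M+1)^(k:ℕ)) < (M+1)^d := by
  induction d with
  | zero => simp
  | succ n ih =>
    rw [Fin.sum_univ_castSucc]
    simp only [Fin.coe_castSucc, Fin.val_last]
    have h1 : (∑ k : Fin n, f k.castSucc * (M+1)^(k:ℕ)) < (M+1)^n :=
      ih (fun k => f k.castSucc) (fun k => hf _)
    have h2 : f (Fin.last n) * (M+1)^n ≤ M * (M+1)^n :=
      Nat.mul_le_mul_right _ (hf _)
    have h3 : (M+1)^(n+1) = (M+1)^n + M * (M+1)^n := by ring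
    omega

lemma digit_lt_iff {d M : ℕ} (f g : Fin d → ℕ) (hf : ∀ k, f k ≤ M) (hg : ∀ k, g k ≤ M) :
    (∑ k, f k * (M+1)^(k:ℕ)) < (∑ k, g k * (M+1)^(k:ℕ)) ↔
      ∃ k₀ : Fin d, (∀ k, k₀ < k → f k = g k) ∧ f k₀ < g k₀ := by
  induction d with
  | zero => simp
  | succ n ih =>
    have hTf : (∑ k : Fin n, f k.castSucc * (M+1)^(k:ℕ)) < (M+1)^n :=
      digit_sum_lt _ (fun k => hf _)
    have hTg : (∑ k : Fin n, g k.castSucc * (M+1)^(k:ℕ)) < (M+1)^n :=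
      digit_sum_lt _ (fun k => hg _)
    rw [Fin.sum_univ_castSucc (f := fun k => f k * (M+1)^(k:ℕ)),
        Fin.sum_univ_castSucc (f := fun k => g k * (M+1)^(k:ℕ))]
    simp only [Fin.coe_castSucc, Fin.val_last]
    constructor
    · intro hlt
      rcases lt_trichotomy (f (Fin.last n)) (g (Fin.last n)) with hl | hl | hl
      · exact ⟨Fin.last n, fun k hk => absurd hk (show k ≤ Fin.last n from Fin.le_last k).not_gt, hl⟩
      · rw [hl] at hlt
        have hT : (∑ k : Fin n, f k.castSucc * (M+1)^(k:ℕ)) < ∑ k : Fin n, g k.castSucc * (M+1)^(k:ℕ) := by omega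
        obtain ⟨k₀, hk₀, hlt'⟩ := (ih (fun k => f k.castSucc) (fun k => g k.castSucc)
          (fun k => hf _) (fun k => hg _)).1 hT
        refine ⟨k₀.castSucc, ?_, hlt'⟩
        intro k hk
        rcases Fin.eq_castSucc_or_eq_last k with ⟨i, rfl⟩ | rfl
        · exact hk₀ i (by rwa [Fin.castSucc_lt_castSucc_iff] at hk)
        · exact hl
      · exfalso
        have h1 : (g (Fin.last n) + 1) * (M+1)^n ≤ f (Fin.last n) * (M+1)^n :=
          Nat.mul_le_mul_right _ (by omega)
        have h2 : (g (Fin.last n) + 1) * (M+1)^n = g (Fin.last n) * (M+1)^n + (M+1)^n := by ring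
        omega
    · rintro ⟨k₀, hk₀, hlt'⟩
      rcases Fin.eq_castSucc_or_eq_last k₀ with ⟨i, rfl⟩ | rfl
      · have hlast : f (Fin.last n) = g (Fin.last n) := hk₀ _ (Fin.castSucc_lt_last i)
        have hT : (∑ k : Fin n, f k.castSucc * (M+1)^(k:ℕ)) < ∑ k : Fin n, g k.castSucc * (M+1)^(k:ℕ) := by
          refine (ih (fun k => f k.castSucc) (fun k => g k.castSucc)
            (fun k => hf _) (fun k => hg _)).2 ⟨i, ?_, hlt'⟩
          intro k hk
          exact hk₀ k.castSucc (by rwa [Fin.castSucc_lt_castSucc_iff])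
        rw [hlast]
        omega
      · have h1 : (f (Fin.last n) + 1) * (M+1)^n ≤ (g (Fin.last n)) * (M+1)^n :=
          Nat.mul_le_mul_right _ (by omega)
        have h2 : (f (Fin.last n) + 1) * (M+1)^n = f (Fin.last n) * (M+1)^n + (M+1)^n := by ring
        omega

lemma digit_eq_iff {d M : ℕ} (f g : Fin d → ℕ) (hf : ∀ k, f k ≤ M) (hg : ∀ k, g k ≤ M)
    (h : (∑ k, f k * (M+1)^(k:ℕ)) = (∑ k, g k * (M+1)^(k:ℕ))) : ∀ k, f k = g k := by
  by_contra hc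
  push_neg at hc
  obtain ⟨k, hk⟩ := hc
  classical
  set S := Finset.univ.filter (fun k : Fin d => f k ≠ g k) with hS
  have hne : S.Nonempty := ⟨k, by simp [hS, hk]⟩
  obtain ⟨k₀, hk₀S, hmax⟩ := S.exists_max_image id hne
  simp only [hS, Finset.mem_filter] at hk₀S
  have habove : ∀ j, k₀ < j → f j = g j := by
    intro j hj
    by_contra hne'
    have := hmax j (by simp [hS, hne'])
    simp only [id] at this
    exact absurd (lt_of_lt_of_le hj this) (lt_irrefl _)
  rcases lt_or_gt_of_ne hk₀S.2 with hl | hl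
  · have := (digit_lt_iff f g hf hg).2 ⟨k₀, habove, hl⟩; omega
  · have := (digit_lt_iff g f hg hf).2 ⟨k₀, fun j hj => (habove j hj).symm, hl⟩; omega





def wB {d : ℕ} (u : Fin d → ℕ) : ℕ := ∑ k : Fin d, u (Fin.rev k) * 3 ^ (k : ℕ)

def wAd {d : ℕ} (lab : Fin d → ℕ) (ℓ : ℕ) (u : Fin d → ℕ) : ℕ :=
  ∑ k : Fin d, (if lab k = ℓ ∧ u k = 1 then 1 else 0) * 2 ^ (k : ℕ)

def keyd {d : ℕ} (lab : Fin d → ℕ) (ℓ : ℕ) (u : Fin d → ℕ) : ℕ :=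
  wAd lab ℓ u * 3 ^ d + wB u

lemma wB_lt {d : ℕ} (u : Fin d → ℕ) (hu : ∀ k, u k ≤ 2) : wB u < 3 ^ d := by
  have := digit_sum_lt (M := 2) (fun k => u (Fin.rev k)) (fun k => hu _)
  simpa [wB] using this

lemma wAd_lt {d : ℕ} (lab : Fin d → ℕ) (ℓ : ℕ) (u : Fin d → ℕ) :
    wAd lab ℓ u < 2 ^ d := by
  have := digit_sum_lt (M := 1) (fun k => if lab k = ℓ ∧ u k = 1 then 1 else 0)
    (fun k => by split <;> omega)
  simpa [wAd] using this

lemma keyd_lt {d : ℕ} (lab : Fin d → ℕ) (ℓ : ℕ) (u : Fin d → ℕ) (hu : ∀ k, u k ≤ 2) :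
    keyd lab ℓ u < 2 ^ d * 3 ^ d := by
  have hA := wAd_lt lab ℓ u
  have hB := wB_lt u hu
  have : (wAd lab ℓ u + 1) * 3 ^ d ≤ 2 ^ d * 3 ^ d := Nat.mul_le_mul_right _ (by omega)
  have h2 : (wAd lab ℓ u + 1) * 3 ^ d = wAd lab ℓ u * 3 ^ d + 3 ^ d := by ring
  unfold keyd
  omega

lemma lexLt_iff_wB {d : ℕ} (u v : Fin d → ℕ) (hu : ∀ k, u k ≤ 2) (hv : ∀ k, v k ≤ 2) :
    lexLt u v ↔ wB u < wB v := by
  have h := digit_lt_iff (M := 2) (fun k => u (Fin.rev k)) (fun k => v (Fin.rev k))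
    (fun k => hu _) (fun k => hv _)
  rw [show ((2:ℕ)+1) = 3 from rfl] at h
  beta_reduce at h
  rw [wB, wB, h]
  constructor
  · rintro ⟨j₀, hbelow, hlt⟩
    refine ⟨Fin.rev j₀, ?_, ?_⟩
    · intro k hk
      have : Fin.rev k < j₀ := by
        have h2 := Fin.rev_lt_rev.mpr hk
        rwa [Fin.rev_rev] at h2
      exact hbelow _ this
    · rw [Fin.rev_rev]; exact hlt
  · rintro ⟨k₀, habove, hlt⟩
    refine ⟨Fin.rev k₀, ?_, hlt⟩
    intro j hj
    have h1 : k₀ < Fin.rev j := by rwa [← Fin.rev_lt_rev, Fin.rev_rev] at hj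
    have h2 := habove (Fin.rev j) h1
    rwa [Fin.rev_rev] at h2

lemma wAd_eq_of_agree {d : ℕ} (lab : Fin d → ℕ) (ℓ : ℕ) (u v : Fin d → ℕ)
    (h : ∀ k, lab k = ℓ → u k = v k) : wAd lab ℓ u = wAd lab ℓ v := by
  unfold wAd
  refine Finset.sum_congr rfl (fun k _ => ?_)
  by_cases hk : lab k = ℓ
  · rw [h k hk]
  · simp [hk]

lemma ltNode_iff_keyd {d : ℕ} (lab : Fin d → ℕ) (ℓ : ℕ) (u v : Fin d → ℕ)
    (hu : ∀ k, u k = 1 ∨ u k = 2) (hv : ∀ k, v k = 1 ∨ v k = 2) :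
    ltNode lab ℓ u v ↔ keyd lab ℓ u < keyd lab ℓ v := by
  have hu2 : ∀ k, u k ≤ 2 := fun k => by rcases hu k with h | h <;> omega
  have hv2 : ∀ k, v k ≤ 2 := fun k => by rcases hv k with h | h <;> omega
  have hBu := wB_lt u hu2
  have hBv := wB_lt v hv2
  have hAiff := digit_lt_iff (M := 1) (fun k => if lab k = ℓ ∧ u k = 1 then 1 else 0)
    (fun k => if lab k = ℓ ∧ v k = 1 then 1 else 0)
    (fun k => by split <;> omega) (fun k => by split <;> omega)
  rw [show ((1:ℕ)+1) = 2 from rfl] at hAiff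
  beta_reduce at hAiff
  rw [show (∑ k : Fin d, (if lab k = ℓ ∧ u k = 1 then 1 else 0) * 2 ^ (k:ℕ)) = wAd lab ℓ u from rfl,
      show (∑ k : Fin d, (if lab k = ℓ ∧ v k = 1 then 1 else 0) * 2 ^ (k:ℕ)) = wAd lab ℓ v from rfl] at hAiff
  constructor
  · rintro (⟨k₀, hlab, hu2', hv1', habove⟩ | ⟨hagree, k₀, hlab, hu1', hv2', hbelow⟩)
    · -- case (i): wA u < wA v
      have hA : wAd lab ℓ u < wAd lab ℓ v := by
        rw [hAiff]
        refine ⟨k₀, ?_, ?_⟩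
        · intro k hk
          by_cases hlk : lab k = ℓ
          · rw [habove k hk hlk]
          · simp [hlk]
        · simp [hlab, hu2', hv1']
      have h1 : (wAd lab ℓ u + 1) * 3 ^ d ≤ wAd lab ℓ v * 3 ^ d :=
        Nat.mul_le_mul_right _ (by omega)
      have h2 : (wAd lab ℓ u + 1) * 3 ^ d = wAd lab ℓ u * 3 ^ d + 3 ^ d := by ring
      rw [keyd, keyd]
      omega
    · -- case (ii)
      have hA : wAd lab ℓ u = wAd lab ℓ v := wAd_eq_of_agree lab ℓ u v hagree
      have hB : wB u < wB v := by
        rw [← lexLt_iff_wB u v hu2 hv2]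
        exact ⟨k₀, hbelow, by omega⟩
      rw [keyd, keyd, hA]
      omega
  · intro hk
    rcases lt_trichotomy (wAd lab ℓ u) (wAd lab ℓ v) with hA | hA | hA
    · left
      rw [hAiff] at hA
      obtain ⟨k₀, habove, hlt⟩ := hA
      have hcond : lab k₀ = ℓ ∧ v k₀ = 1 := by
        by_contra hc
        rw [if_neg hc] at hlt
        omega
      have hucond : ¬(lab k₀ = ℓ ∧ u k₀ = 1) := by
        intro hc
        rw [if_pos hc, if_pos hcond] at hlt
        omega
      refine ⟨k₀, hcond.1, ?_, hcond.2, ?_⟩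
      · rcases hu k₀ with h | h
        · exact absurd ⟨hcond.1, h⟩ hucond
        · exact h
      · intro k hkk hlk
        have := habove k hkk
        simp only [hlk, true_and] at this
        rcases hu k with h1 | h1 <;> rcases hv k with h2 | h2 <;> simp [h1, h2] at this ⊢
    · right
      have hB : wB u < wB v := by
        rw [keyd, keyd, hA] at hk
        omega
      have hagree : ∀ k, lab k = ℓ → u k = v k := by
        have := digit_eq_iff (M := 1) (fun k => if lab k = ℓ ∧ u k = 1 then 1 else 0)
          (fun k => if lab k = ℓ ∧ v k = 1 then 1 else 0)
          (fun k => by split <;> omega) (fun k => by split <;> omega)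
          (by rw [show ((1:ℕ)+1) = 2 from rfl]; exact hA)
        beta_reduce at this
        intro k hlk
        have hh := this k
        simp only [hlk, true_and] at hh
        rcases hu k with h1 | h1 <;> rcases hv k with h2 | h2 <;> simp [h1, h2] at hh ⊢
      obtain ⟨k₀, hbelow, hlt⟩ := (lexLt_iff_wB u v hu2 hv2).2 hB
      have hu1' : u k₀ = 1 := by rcases hu k₀ with h | h <;> rcases hv k₀ with h2 | h2 <;> omega
      have hv2' : v k₀ = 2 := by rcases hu k₀ with h | h <;> rcases hv k₀ with h2 | h2 <;> omega
      refine ⟨hagree, k₀, ?_, hu1', hv2', hbelow⟩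
      intro hlk
      have := hagree k₀ hlk
      omega
    · exfalso
      have h1 : (wAd lab ℓ v + 1) * 3 ^ d ≤ wAd lab ℓ u * 3 ^ d :=
        Nat.mul_le_mul_right _ (by omega)
      have h2 : (wAd lab ℓ v + 1) * 3 ^ d = wAd lab ℓ v * 3 ^ d + 3 ^ d := by ring
      rw [keyd, keyd] at hk
      omega



lemma wB_snoc {d : ℕ} (a : Fin d → ℕ) (ε : ℕ) :
    wB (Fin.snoc a ε : Fin (d+1) → ℕ) = 3 * wB a + ε := by
  rw [wB, Fin.sum_univ_succ]
  have h0 : (Fin.rev (0 : Fin (d+1))) = Fin.last d := by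
    ext; simp [Fin.val_rev]
  rw [h0, Fin.snoc_last]
  have hs : ∀ k : Fin d, (Fin.snoc a ε : Fin (d+1) → ℕ) (Fin.rev k.succ) * 3 ^ ((k.succ : Fin (d+1)) : ℕ)
      = 3 * (a (Fin.rev k) * 3 ^ (k : ℕ)) := by
    intro k
    have : Fin.rev k.succ = (Fin.rev k).castSucc := by
      ext
      simp only [Fin.val_rev, Fin.val_succ, Fin.coe_castSucc]
      omega
    rw [this, Fin.snoc_castSucc, Fin.val_succ, pow_succ]
    ring
  rw [Finset.sum_congr rfl (fun k _ => hs k), ← Finset.mul_sum, wB]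
  simp only [Fin.val_zero, pow_zero]
  ring

lemma wAd_snoc {d : ℕ} (lab : Fin d → ℕ) (ℓs ℓ : ℕ) (a : Fin d → ℕ) (ε : ℕ) :
    wAd (Fin.snoc lab ℓs) ℓ (Fin.snoc a ε : Fin (d+1) → ℕ)
      = wAd lab ℓ a + (if ℓs = ℓ ∧ ε = 1 then 2 ^ d else 0) := by
  rw [wAd, Fin.sum_univ_castSucc]
  simp only [Fin.snoc_castSucc, Fin.snoc_last, Fin.coe_castSucc, Fin.val_last]
  rw [← wAd]
  congr 1
  split <;> simp

lemma keyd_snoc_ne {d : ℕ} (lab : Fin d → ℕ) (ℓs ℓ : ℕ) (hne : ℓs ≠ ℓ)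
    (a : Fin d → ℕ) (ε : ℕ) :
    keyd (Fin.snoc lab ℓs) ℓ (Fin.snoc a ε : Fin (d+1) → ℕ) = 3 * keyd lab ℓ a + ε := by
  rw [keyd, keyd, wAd_snoc, wB_snoc]
  rw [if_neg (by tauto)]
  ring

lemma keyd_snoc_eq {d : ℕ} (lab : Fin d → ℕ) (ℓ : ℕ) (a : Fin d → ℕ) (ε : ℕ) :
    keyd (Fin.snoc lab ℓ) ℓ (Fin.snoc a ε : Fin (d+1) → ℕ)
      = 3 * keyd lab ℓ a + ε + (if ε = 1 then 2 ^ d * 3 ^ (d+1) else 0) := by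
  rw [keyd, keyd, wAd_snoc, wB_snoc]
  by_cases hε : ε = 1
  · rw [if_pos ⟨rfl, hε⟩, if_pos hε]
    ring
  · rw [if_neg (by tauto), if_neg hε]
    ring


lemma fin_strictMono_of_consec {m : ℕ} (f : Fin (m+1) → ℕ)
    (hf : ∀ (j : ℕ) (hj : j + 1 < m + 1), f ⟨j, by omega⟩ < f ⟨j+1, hj⟩) : StrictMono f := by
  rw [Fin.strictMono_iff_lt_succ]
  intro i
  have := hf i.val (by omega)
  have e1 : i.castSucc = (⟨i.val, by omega⟩ : Fin (m+1)) := Fin.ext rfl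
  have e2 : i.succ = (⟨i.val + 1, by omega⟩ : Fin (m+1)) := Fin.ext rfl
  rw [e1, e2]
  exact this

lemma perm_sorted_unique {n : ℕ} (f : Fin n → ℕ) (π₁ π₂ : Equiv.Perm (Fin n))
    (h₁ : StrictMono (fun j => f (π₁ j))) (h₂ : StrictMono (fun j => f (π₂ j))) :
    ∀ j, π₁ j = π₂ j := by
  set ρ : Equiv.Perm (Fin n) := π₂.trans π₁.symm with hρdef
  have hcomp : ∀ j, π₁ (ρ j) = π₂ j := by
    intro j; simp [hρdef]
  have hρ : StrictMono (⇑ρ) := by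
    intro a b hab
    have h2 := h₂ hab
    dsimp only at h2
    rw [← hcomp a, ← hcomp b] at h2
    exact h₁.lt_iff_lt.1 h2
  have hwf : WellFoundedLT (Fin n) := inferInstance
  have hid : ⇑ρ = id := by
    refine (hρ.range_inj strictMono_id).1 ?_
    rw [ρ.surjective.range_eq]
    exact (Set.range_id (α := Fin n)).symm
  intro j
  have := congrFun hid j
  have h3 : π₁ (ρ j) = π₁ j := by rw [this]; rfl
  rw [← hcomp j, h3]

set_option maxHeartbeats 1000000 in
lemma cyc_consec {n : ℕ} (F : Fin (n+1) → ℕ) (t : Fin (n+1))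
    (hF : StrictMono (fun j : Fin (n+1) => F (j + t)))
    (a : ℕ) (ha : a < n+1) (hne : (a+1) % (n+1) ≠ (t:ℕ)) :
    F ⟨a, ha⟩ < F ⟨(a+1) % (n+1), Nat.mod_lt _ (by omega)⟩ := by
  set tv := (t : ℕ) with htv
  have htlt : tv < n + 1 := t.isLt
  set b := a + (n + 1 - tv) with hb
  set jv := b % (n+1) with hjv
  have hjvlt : jv < n + 1 := Nat.mod_lt _ (by omega)
  have e1 : (jv + tv) % (n+1) = a := by
    rcases Nat.lt_or_ge b (n+1) with hbn | hbn
    · have hj : jv = b := Nat.mod_eq_of_lt hbn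
      have h2 : jv + tv = a + (n+1) := by omega
      rw [h2, Nat.add_mod_right, Nat.mod_eq_of_lt ha]
    · have hblt : b < 2 * (n+1) := by omega
      have hj : jv = b - (n+1) := by
        rw [hjv, Nat.mod_eq_sub_mod hbn, Nat.mod_eq_of_lt (by omega)]
      have h2 : jv + tv = a := by omega
      rw [h2, Nat.mod_eq_of_lt ha]
  have e2 : (jv + 1 + tv) % (n+1) = (a+1) % (n+1) := by
    have h1 : jv + 1 + tv = (jv + tv) + 1 := by omega
    rw [h1, Nat.add_mod (jv+tv) 1, e1]
    conv_rhs => rw [Nat.add_mod, Nat.mod_eq_of_lt ha]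
  have hjv1 : jv + 1 < n + 1 := by
    by_contra hcon
    have hjvn : jv = n := by omega
    apply hne
    have h3 : jv + 1 + tv = (n+1) + tv := by omega
    rw [h3, Nat.add_mod_left, Nat.mod_eq_of_lt htlt] at e2
    omega
  have hlt : (⟨jv, by omega⟩ : Fin (n+1)) < ⟨jv+1, hjv1⟩ := by
    rw [Fin.mk_lt_mk]; omega
  have := hF hlt
  dsimp only at this
  have a1 : (⟨jv, by omega⟩ : Fin (n+1)) + t = ⟨a, ha⟩ := by
    apply Fin.ext; rw [Fin.val_add]; exact e1
  have a2 : (⟨jv + 1, hjv1⟩ : Fin (n+1)) + t = ⟨(a+1) % (n+1), Nat.mod_lt _ (by omega)⟩ := by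
    apply Fin.ext; rw [Fin.val_add]; exact e2
  rw [a1, a2] at this
  exact this

set_option maxHeartbeats 1000000 in
lemma rot_strictMono {m : ℕ} (G : Fin (m+1) → ℕ) (t' : Fin (m+1))
    (hcons : ∀ (k : ℕ) (hk : k < m+1), (k+1) % (m+1) ≠ (t':ℕ) →
      G ⟨k, hk⟩ < G ⟨(k+1)%(m+1), Nat.mod_lt _ (by omega)⟩) :
    StrictMono fun j => G (j + t') := by
  apply fin_strictMono_of_consec
  intro j hj
  set tv := (t' : ℕ) with htv
  set k := (j + tv) % (m+1) with hk
  have hklt : k < m+1 := Nat.mod_lt _ (by omega)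
  have e2 : (j + 1 + tv) % (m+1) = (k+1) % (m+1) := by
    have h1 : j + 1 + tv = (j + tv) + 1 := by omega
    rw [h1, Nat.add_mod (j+tv) 1, ← hk]
    conv_rhs => rw [Nat.add_mod, Nat.mod_eq_of_lt hklt]
  have hne : (k+1) % (m+1) ≠ tv := by
    intro hcon
    have hval : ((⟨j+1, hj⟩ : Fin (m+1)) + t') = t' := by
      apply Fin.ext
      rw [Fin.val_add, e2, hcon]
    have h0 : (⟨j+1, hj⟩ : Fin (m+1)) = 0 := by
      have := add_right_cancel (a := (⟨j+1, hj⟩ : Fin (m+1))) (b := t') (c := 0)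
      have h1 : (⟨j+1, hj⟩ : Fin (m+1)) + t' = 0 + t' := by rw [hval, zero_add]
      exact add_right_cancel h1
    have := congrArg Fin.val h0
    simp at this
  have a1 : (⟨j, by omega⟩ : Fin (m+1)) + t' = ⟨k, hklt⟩ := by
    apply Fin.ext; rw [Fin.val_add]
  have a2 : (⟨j+1, hj⟩ : Fin (m+1)) + t' = ⟨(k+1)%(m+1), Nat.mod_lt _ (by omega)⟩ := by
    apply Fin.ext; rw [Fin.val_add]; exact e2
  show G ((⟨j, by omega⟩ : Fin (m+1)) + t') < G ((⟨j+1, hj⟩ : Fin (m+1)) + t')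
  rw [a1, a2]
  exact hcons k hklt hne


lemma consec_of_cyc {d : ℕ} (F : Fin (d+1) → ℕ) (t : Fin (d+1))
    (hF : StrictMono fun j => F (j + t)) (a b : ℕ) (ha : a < d+1) (hb : b < d+1)
    (hab : (a+1) % (d+1) = b) (hne : b ≠ (t:ℕ)) : F ⟨a, ha⟩ < F ⟨b, hb⟩ := by
  have := cyc_consec F t hF a ha (by rw [hab]; exact hne)
  have e : (⟨(a+1) % (d+1), Nat.mod_lt _ (by omega)⟩ : Fin (d+1)) = ⟨b, hb⟩ := Fin.ext hab
  rwa [e] at this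

set_option maxHeartbeats 2000000 in
lemma liftA {d : ℕ} (F : Fin (d+1) → ℕ) (t : Fin (d+1))
    (hF : StrictMono fun j => F (j + t)) (h : ℕ) (hh1 : 1 ≤ h) (hh2 : h ≤ d+1)
    (G : Fin (d+2) → ℕ)
    (hG : ∀ (j : ℕ) (hj : j < d+2), G ⟨j, hj⟩ =
      if _hjh : j < h then 3 * F ⟨j, by omega⟩ + 1 else 3 * F ⟨j-1, by omega⟩ + 2) :
    ∃ t' : Fin (d+2), StrictMono fun j => G (j + t') := by
  set tv := (t : ℕ) with htv
  have htlt : tv < d + 1 := t.isLt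
  refine ⟨⟨if tv < h then tv else tv + 1, by split <;> omega⟩, ?_⟩
  apply rot_strictMono
  intro k hk hne
  simp only at hne
  rcases Nat.lt_or_ge k (d+1) with hkd | hkd
  · -- k' = k+1
    have hk1 : (k+1) % (d+2) = k+1 := Nat.mod_eq_of_lt (by omega)
    rw [hk1] at hne
    have egoal : (⟨(k+1) % (d+2), Nat.mod_lt _ (by omega)⟩ : Fin (d+2)) = ⟨k+1, by omega⟩ :=
      Fin.ext hk1
    rw [egoal, hG k hk, hG (k+1) (by omega)]
    rcases Nat.lt_trichotomy (k+1) h with hc | hc | hc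
    · rw [dif_pos (show k < h by omega), dif_pos hc]
      have := consec_of_cyc F t hF k (k+1) (by omega) (by omega)
        (Nat.mod_eq_of_lt (by omega)) (by split at hne <;> omega)
      omega
    · rw [dif_pos (show k < h by omega), dif_neg (by omega)]
      have e2 : (⟨k+1-1, by omega⟩ : Fin (d+1)) = ⟨k, by omega⟩ := Fin.mk_eq_mk.mpr (by omega)
      rw [e2]
      omega
    · rw [dif_neg (show ¬ k < h by omega), dif_neg (by omega)]
      have e2 : (⟨k+1-1, by omega⟩ : Fin (d+1)) = ⟨k, by omega⟩ := Fin.mk_eq_mk.mpr (by omega)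
      rw [e2]
      have := consec_of_cyc F t hF (k-1) k (by omega) (by omega)
        (by rw [show k-1+1 = k by omega]; exact Nat.mod_eq_of_lt (by omega))
        (by split at hne <;> omega)
      omega
  · -- k = d+1, k' = 0
    have hkeq : k = d + 1 := by omega
    subst hkeq
    have hk1 : (d+1+1) % (d+2) = 0 := by
      rw [show d+1+1 = d+2 by omega, Nat.mod_self]
    rw [hk1] at hne
    have egoal : (⟨(d+1+1) % (d+2), Nat.mod_lt _ (by omega)⟩ : Fin (d+2)) = ⟨0, by omega⟩ :=
      Fin.ext hk1
    rw [egoal, hG (d+1) hk, hG 0 (by omega)]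
    rw [dif_neg (by omega), dif_pos (by omega)]
    have e2 : (⟨d+1-1, by omega⟩ : Fin (d+1)) = ⟨d, by omega⟩ := Fin.mk_eq_mk.mpr (by omega)
    rw [e2]
    have := consec_of_cyc F t hF d 0 (by omega) (by omega)
      (by rw [show d+1 = d+1 from rfl]; exact Nat.mod_self _)
      (by split at hne <;> omega)
    omega

set_option maxHeartbeats 2000000 in
lemma liftB {d : ℕ} (F : Fin (d+1) → ℕ) (hF : StrictMono F) (C : ℕ)
    (hC : ∀ a, 3 * F a + 2 < C) (h : ℕ) (hh1 : 1 ≤ h) (hh2 : h ≤ d+1)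
    (G : Fin (d+2) → ℕ)
    (hG : ∀ (j : ℕ) (hj : j < d+2), G ⟨j, hj⟩ =
      if _hjh : j < h then 3 * F ⟨j, by omega⟩ + 1 + C else 3 * F ⟨j-1, by omega⟩ + 2) :
    ∃ t' : Fin (d+2), StrictMono fun j => G (j + t') := by
  refine ⟨⟨h % (d+2), Nat.mod_lt _ (by omega)⟩, ?_⟩
  have hmod : h % (d+2) = h := Nat.mod_eq_of_lt (by omega)
  apply rot_strictMono
  intro k hk hne
  simp only [hmod] at hne
  rcases Nat.lt_or_ge k (d+1) with hkd | hkd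
  · have hk1 : (k+1) % (d+2) = k+1 := Nat.mod_eq_of_lt (by omega)
    rw [hk1] at hne
    have egoal : (⟨(k+1) % (d+2), Nat.mod_lt _ (by omega)⟩ : Fin (d+2)) = ⟨k+1, by omega⟩ :=
      Fin.ext hk1
    rw [egoal, hG k hk, hG (k+1) (by omega)]
    rcases Nat.lt_trichotomy (k+1) h with hc | hc | hc
    · rw [dif_pos (show k < h by omega), dif_pos hc]
      have := hF (show (⟨k, by omega⟩ : Fin (d+1)) < ⟨k+1, by omega⟩ by rw [Fin.mk_lt_mk]; omega)
      omega
    · exact absurd hc hne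
    · rw [dif_neg (show ¬ k < h by omega), dif_neg (by omega)]
      have := hF (show (⟨k-1, by omega⟩ : Fin (d+1)) < ⟨k+1-1, by omega⟩ by rw [Fin.mk_lt_mk]; omega)
      omega
  · have hkeq : k = d + 1 := by omega
    subst hkeq
    have hk1 : (d+1+1) % (d+2) = 0 := by
      rw [show d+1+1 = d+2 by omega, Nat.mod_self]
    have egoal : (⟨(d+1+1) % (d+2), Nat.mod_lt _ (by omega)⟩ : Fin (d+2)) = ⟨0, by omega⟩ :=
      Fin.ext hk1
    rw [egoal, hG (d+1) hk, hG 0 (by omega)]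
    rw [dif_neg (by omega), dif_pos (by omega)]
    have := hC ⟨d+1-1, by omega⟩
    omega

lemma constructible_ok {q d : ℕ} {lab : Fin d → ℕ} {u : Fin (d+1) → Fin d → ℕ}
    (hR : Constructible q d lab u) : ∀ j k, u j k = 1 ∨ u j k = 2 := by
  induction hR with
  | base ℓ h1 hq =>
    intro j k
    fin_cases j <;> fin_cases k <;> simp
  | step hRold ℓs hℓ1 hℓq v σv hv hsort h hh1 hh2 ih =>
    intro j k
    dsimp only
    split
    · rcases Fin.eq_castSucc_or_eq_last k with ⟨k', rfl⟩ | rfl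
      · rw [Fin.snoc_castSucc, hv]
        exact ih _ _
      · rw [Fin.snoc_last]
        left; rfl
    · rcases Fin.eq_castSucc_or_eq_last k with ⟨k', rfl⟩ | rfl
      · rw [Fin.snoc_castSucc, hv]
        exact ih _ _
      · rw [Fin.snoc_last]
        right; rfl

lemma fin2_strictMono {f : Fin 2 → ℕ} (h : f 0 < f 1) : StrictMono f := by
  intro a b hab
  fin_cases a <;> fin_cases b <;>
    first
      | exact absurd hab (by decide)
      | simpa using h

lemma wB_base (x : ℕ) : wB ![x] = x := by
  rw [wB, Fin.sum_univ_one]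
  have h0 : (Fin.rev 0 : Fin 1) = 0 := Subsingleton.elim _ _
  rw [h0]
  simp

lemma keyd_base (lv ℓv x : ℕ) :
    keyd (fun _ : Fin 1 => lv) ℓv ![x] = (if lv = ℓv ∧ x = 1 then 3 else 0) + x := by
  rw [keyd, wAd, wB, Fin.sum_univ_one, Fin.sum_univ_one]
  have h0 : (Fin.rev 0 : Fin 1) = 0 := Subsingleton.elim _ _
  rw [h0]
  simp only [Matrix.cons_val_zero, Fin.val_zero, pow_zero, pow_one, mul_one]
  by_cases hc : lv = ℓv ∧ x = 1
  · obtain ⟨rfl, rfl⟩ := hc; simp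
  · simp only [if_neg hc]; simp; exact if_neg hc

set_option maxHeartbeats 2000000 in
lemma constructible_main {q d : ℕ} {lab : Fin d → ℕ} {u : Fin (d+1) → Fin d → ℕ}
    (hR : Constructible q d lab u) :
    ∃ π : Equiv.Perm (Fin (d+1)),
      (∃ r : Fin (d+1), StrictMono fun j => wB (u (π (j + r)))) ∧
      (∀ ℓ : ℕ, ∃ t : Fin (d+1), StrictMono fun j => keyd lab ℓ (u (π (j + t)))) := by
  induction hR with
  | base ℓ1 h1 hq =>
    refine ⟨Equiv.refl _, ⟨0, ?_⟩, ?_⟩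
    · apply fin2_strictMono
      have e0 : ((0:Fin 2) + 0) = 0 := by decide
      have e1 : ((1:Fin 2) + 0) = 1 := by decide
      simp only [Equiv.refl_apply, e0, e1, Matrix.cons_val_zero, Matrix.cons_val_one,
        Matrix.head_cons]
      rw [wB_base, wB_base]
      omega
    · intro ℓ
      by_cases hc : ℓ1 = ℓ
      · refine ⟨1, ?_⟩
        apply fin2_strictMono
        have e0 : ((0:Fin 2) + 1) = 1 := by decide
        have e1 : ((1:Fin 2) + 1) = 0 := by decide
        simp only [Equiv.refl_apply, e0, e1, Matrix.cons_val_zero, Matrix.cons_val_one,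
          Matrix.head_cons]
        rw [keyd_base, keyd_base]
        simp [hc]
      · refine ⟨0, ?_⟩
        apply fin2_strictMono
        have e0 : ((0:Fin 2) + 0) = 0 := by decide
        have e1 : ((1:Fin 2) + 0) = 1 := by decide
        simp only [Equiv.refl_apply, e0, e1, Matrix.cons_val_zero, Matrix.cons_val_one,
          Matrix.head_cons]
        rw [keyd_base, keyd_base]
        simp [hc]
  | step hRold ℓs hℓ1 hℓq v σv hv hsort h hh1 hh2 ih =>
    rename_i dd labd ud
    obtain ⟨π, ⟨r, hBr⟩, hkeyall⟩ := ih
    have hOK : ∀ j k, ud j k = 1 ∨ ud j k = 2 := constructible_ok hRold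
    have hOK2 : ∀ j k, ud j k ≤ 2 := fun j k => by rcases hOK j k with hh | hh <;> omega
    obtain ⟨ts, hks⟩ := hkeyall ℓs
    have hsortK : StrictMono fun j => keyd labd ℓs (ud (σv j)) := by
      intro a b hab
      show keyd labd ℓs (ud (σv a)) < keyd labd ℓs (ud (σv b))
      rw [← hv a, ← hv b]
      refine (ltNode_iff_keyd labd ℓs (v a) (v b) ?_ ?_).1 (hsort a b hab)
      · rw [hv]; exact hOK _
      · rw [hv]; exact hOK _
    have hperm : ∀ j, σv j = ((Equiv.addRight ts).trans π) j := by
      apply perm_sorted_unique (fun x => keyd labd ℓs (ud x)) σv ((Equiv.addRight ts).trans π)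
      · exact hsortK
      · simpa [Equiv.trans_apply] using hks
    have hvful : ∀ y, v y = ud (π (y + ts)) := by
      intro y
      rw [hv y, hperm y]
      simp [Equiv.trans_apply]
    refine ⟨Equiv.refl _, ?_, ?_⟩
    · -- lexicographic part, via liftA
      have hveq : ∀ j : Fin (dd+1), v (j + (r - ts)) = ud (π (j + r)) := by
        intro j
        rw [hvful]
        congr 2
        rw [add_assoc, sub_add_cancel]
      have hF : StrictMono fun j => (fun y => wB (v y)) (j + (r - ts)) := by
        intro a b hab
        show wB (v (a + (r - ts))) < wB (v (b + (r - ts)))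
        rw [hveq a, hveq b]
        exact hBr hab
      obtain ⟨t', hSM⟩ := liftA (fun y => wB (v y)) (r - ts) hF h hh1 hh2
        (fun x : Fin (dd+2) => wB (show Fin (dd+1) → ℕ from
          if hj : (x : ℕ) < h then Fin.snoc (v ⟨(x : ℕ), by omega⟩) 1
          else Fin.snoc (v ⟨(x : ℕ) - 1, by omega⟩) 2))
        (by
          intro j hj
          rcases Nat.lt_or_ge j h with hjh | hjh
          · show wB (show Fin (dd+1) → ℕ from
              if hj2 : j < h then Fin.snoc (v ⟨j, by omega⟩) 1
              else Fin.snoc (v ⟨j - 1, by omega⟩) 2) =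
              if _hjh : j < h then 3 * wB (v ⟨j, by omega⟩) + 1
              else 3 * wB (v ⟨j - 1, by omega⟩) + 2
            rw [dif_pos hjh, dif_pos hjh, wB_snoc]
          · show wB (show Fin (dd+1) → ℕ from
              if hj2 : j < h then Fin.snoc (v ⟨j, by omega⟩) 1
              else Fin.snoc (v ⟨j - 1, by omega⟩) 2) =
              if _hjh : j < h then 3 * wB (v ⟨j, by omega⟩) + 1
              else 3 * wB (v ⟨j - 1, by omega⟩) + 2
            rw [dif_neg (by omega), dif_neg (by omega), wB_snoc])
      exact ⟨t', hSM⟩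
    · intro ℓ
      by_cases hℓ : ℓs = ℓ
      · subst hℓ
        have hF : StrictMono fun y => keyd labd ℓs (v y) := by
          intro a b hab
          show keyd labd ℓs (v a) < keyd labd ℓs (v b)
          rw [hv a, hv b]
          exact hsortK hab
        have hkeybound : ∀ a, 3 * keyd labd ℓs (v a) + 2 < 2 ^ dd * 3 ^ (dd + 1) := by
          intro a
          have hb : keyd labd ℓs (v a) < 2 ^ dd * 3 ^ dd := by
            apply keyd_lt
            intro k
            rw [hv]
            exact hOK2 _ _
          have he : 2 ^ dd * 3 ^ (dd + 1) = 3 * (2 ^ dd * 3 ^ dd) := by ring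
          omega
        obtain ⟨t', hSM⟩ := liftB (fun y => keyd labd ℓs (v y)) hF (2 ^ dd * 3 ^ (dd+1))
          hkeybound h hh1 hh2
          (fun x : Fin (dd+2) => keyd (Fin.snoc labd ℓs) ℓs (show Fin (dd+1) → ℕ from
            if hj : (x : ℕ) < h then Fin.snoc (v ⟨(x : ℕ), by omega⟩) 1
            else Fin.snoc (v ⟨(x : ℕ) - 1, by omega⟩) 2))
          (by
            intro j hj
            rcases Nat.lt_or_ge j h with hjh | hjh
            · show keyd (Fin.snoc labd ℓs) ℓs (show Fin (dd+1) → ℕ from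
                if hj2 : j < h then Fin.snoc (v ⟨j, by omega⟩) 1
                else Fin.snoc (v ⟨j - 1, by omega⟩) 2) =
                if _hjh : j < h then 3 * keyd labd ℓs (v ⟨j, by omega⟩) + 1 + 2 ^ dd * 3 ^ (dd+1)
                else 3 * keyd labd ℓs (v ⟨j - 1, by omega⟩) + 2
              rw [dif_pos hjh, dif_pos hjh, keyd_snoc_eq]
              norm_num
            · show keyd (Fin.snoc labd ℓs) ℓs (show Fin (dd+1) → ℕ from
                if hj2 : j < h then Fin.snoc (v ⟨j, by omega⟩) 1
                else Fin.snoc (v ⟨j - 1, by omega⟩) 2) =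
                if _hjh : j < h then 3 * keyd labd ℓs (v ⟨j, by omega⟩) + 1 + 2 ^ dd * 3 ^ (dd+1)
                else 3 * keyd labd ℓs (v ⟨j - 1, by omega⟩) + 2
              rw [dif_neg (by omega), dif_neg (by omega), keyd_snoc_eq]
              norm_num)
        exact ⟨t', hSM⟩
      · obtain ⟨tl, hkl⟩ := hkeyall ℓ
        have hveq : ∀ j : Fin (dd+1), v (j + (tl - ts)) = ud (π (j + tl)) := by
          intro j
          rw [hvful]
          congr 2
          rw [add_assoc, sub_add_cancel]
        have hF : StrictMono fun j => (fun y => keyd labd ℓ (v y)) (j + (tl - ts)) := by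
          intro a b hab
          show keyd labd ℓ (v (a + (tl - ts))) < keyd labd ℓ (v (b + (tl - ts)))
          rw [hveq a, hveq b]
          exact hkl hab
        obtain ⟨t', hSM⟩ := liftA (fun y => keyd labd ℓ (v y)) (tl - ts) hF h hh1 hh2
          (fun x : Fin (dd+2) => keyd (Fin.snoc labd ℓs) ℓ (show Fin (dd+1) → ℕ from
            if hj : (x : ℕ) < h then Fin.snoc (v ⟨(x : ℕ), by omega⟩) 1
            else Fin.snoc (v ⟨(x : ℕ) - 1, by omega⟩) 2))
          (by
            intro j hj
            rcases Nat.lt_or_ge j h with hjh | hjh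
            · show keyd (Fin.snoc labd ℓs) ℓ (show Fin (dd+1) → ℕ from
                if hj2 : j < h then Fin.snoc (v ⟨j, by omega⟩) 1
                else Fin.snoc (v ⟨j - 1, by omega⟩) 2) =
                if _hjh : j < h then 3 * keyd labd ℓ (v ⟨j, by omega⟩) + 1
                else 3 * keyd labd ℓ (v ⟨j - 1, by omega⟩) + 2
              rw [dif_pos hjh, dif_pos hjh, keyd_snoc_ne labd ℓs ℓ hℓ]
            · show keyd (Fin.snoc labd ℓs) ℓ (show Fin (dd+1) → ℕ from
                if hj2 : j < h then Fin.snoc (v ⟨j, by omega⟩) 1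
                else Fin.snoc (v ⟨j - 1, by omega⟩) 2) =
                if _hjh : j < h then 3 * keyd labd ℓ (v ⟨j, by omega⟩) + 1
                else 3 * keyd labd ℓ (v ⟨j - 1, by omega⟩) + 2
              rw [dif_neg (by omega), dif_neg (by omega), keyd_snoc_ne labd ℓs ℓ hℓ])
        exact ⟨t', hSM⟩

/-- If `σ` sorts the tuples of a constructible special point data increasingly for the
lexicographic order and `τ` sorts them increasingly for `<_ℓ`, then `τ` is a cyclic shift
of `σ`. -/
theorem constructible_ordering_cyclic {q d : ℕ} (hq : 1 ≤ q) (hd : 1 ≤ d)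
    {lab : Fin d → ℕ} {u : Fin (d + 1) → Fin d → ℕ}
    (hR : Constructible q d lab u) (ℓ : ℕ) (hℓ1 : 1 ≤ ℓ) (hℓq : ℓ ≤ q)
    (σ τ : Equiv.Perm (Fin (d + 1)))
    (hσ : ∀ i j : Fin (d + 1), i < j → lexLt (u (σ i)) (u (σ j)))
    (hτ : ∀ i j : Fin (d + 1), i < j → ltNode lab ℓ (u (τ i)) (u (τ j))) :
    ∃ h₀ : ℕ, h₀ ≤ d ∧ ∀ i : Fin (d + 1),
      τ i = σ ⟨((i : ℕ) + h₀) % (d + 1), Nat.mod_lt _ (by omega)⟩ := by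
  obtain ⟨π, ⟨r, hB⟩, hkey⟩ := constructible_main hR
  have hOK := constructible_ok hR
  have hOK2 : ∀ j k, u j k ≤ 2 := fun j k => by rcases hOK j k with h' | h' <;> omega
  obtain ⟨t, hK⟩ := hkey ℓ
  have hσ' : StrictMono fun j => wB (u (σ j)) := by
    intro a b hab
    exact (lexLt_iff_wB _ _ (fun k => hOK2 _ _) (fun k => hOK2 _ _)).1 (hσ a b hab)
  have hτ' : StrictMono fun j => keyd lab ℓ (u (τ j)) := by
    intro a b hab
    exact (ltNode_iff_keyd lab ℓ _ _ (hOK _) (hOK _)).1 (hτ a b hab)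
  have hσeq : ∀ j, σ j = ((Equiv.addRight r).trans π) j := by
    apply perm_sorted_unique (fun x => wB (u x))
    · exact hσ'
    · simpa [Equiv.trans_apply] using hB
  have hτeq : ∀ j, τ j = ((Equiv.addRight t).trans π) j := by
    apply perm_sorted_unique (fun x => keyd lab ℓ (u x))
    · exact hτ'
    · simpa [Equiv.trans_apply] using hK
  refine ⟨(((t - r) : Fin (d+1)) : ℕ), by have := ((t - r) : Fin (d+1)).isLt; omega, ?_⟩
  intro i
  have e1 : (⟨((i : ℕ) + (((t - r) : Fin (d+1)) : ℕ)) % (d+1), Nat.mod_lt _ (by omega)⟩ : Fin (d+1))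
      = i + (t - r) := by
    apply Fin.ext
    rw [Fin.val_add]
  rw [hτeq i, hσeq, e1]
  simp only [Equiv.trans_apply, Equiv.coe_addRight]
  congr 1
  rw [add_assoc, sub_add_cancel]
end

section
/- Let R = ((ℓ_1,…,ℓ_d),(u_1,…,u_{d+1})) be a constructible special point data of level d with q nodes, and assume u_1, …, u_{d+1} is listed in increasing lexicographic order. Then for every node label ℓ ∈ {1,…,q} and every j = 1,…,d one has a^ℓ_{u_j}(R) ≤ a^ℓ_{u_{j+1}}(R). -/

lemma lexLt_irrefl {d : ℕ} {x : Fin d → ℕ} : ¬ lexLt x x :=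
  fun ⟨_, _, hk⟩ => lt_irrefl _ hk

lemma lexLt_asymm {d : ℕ} {x y : Fin d → ℕ} (h1 : lexLt x y) (h2 : lexLt y x) : False := by
  obtain ⟨k₀, hp, hk⟩ := h1
  obtain ⟨k₁, hq, hk'⟩ := h2
  rcases lt_trichotomy k₀ k₁ with h | h | h
  · rw [hq k₀ h] at hk; omega
  · subst h; omega
  · rw [hp k₁ h] at hk'; omega

lemma lexLt_snoc {d : ℕ} {x y : Fin d → ℕ} {ε δ : ℕ}
    (h : lexLt (Fin.snoc x ε) (Fin.snoc y δ)) : lexLt x y ∨ (x = y ∧ ε < δ) := by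
  obtain ⟨k₀, hpre, hk₀⟩ := h
  rcases Fin.eq_castSucc_or_eq_last k₀ with ⟨k, rfl⟩ | rfl
  · left
    refine ⟨k, fun k' hk' => ?_, by simpa using hk₀⟩
    have := hpre k'.castSucc (Fin.castSucc_lt_castSucc_iff.mpr hk')
    simpa using this
  · right
    refine ⟨funext fun k => ?_, by simpa using hk₀⟩
    have := hpre k.castSucc (Fin.castSucc_lt_last k)
    simpa using this

/-- The trigger for the strict inequality: a coordinate labeled `m` where `x` has `1`,
`y` has `2`, and `x,y` agree on all later `m`-labeled coordinates. -/
def Dcond {d : ℕ} (lab : Fin d → ℕ) (m : ℕ) (x y : Fin d → ℕ) : Prop :=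
  ∃ k : Fin d, lab k = m ∧ x k = 1 ∧ y k = 2 ∧
    ∀ k' : Fin d, k < k' → lab k' = m → x k' = y k'

lemma Dcond_snoc {d : ℕ} {lab : Fin d → ℕ} {ℓ m : ℕ} {x y : Fin d → ℕ} {ε δ : ℕ}
    (h : Dcond (Fin.snoc lab ℓ) m (Fin.snoc x ε) (Fin.snoc y δ)) :
    (m = ℓ ∧ ε = 1 ∧ δ = 2) ∨ (Dcond lab m x y ∧ (m = ℓ → ε = δ)) := by
  obtain ⟨k, hlabk, hx1, hy2, hafter⟩ := h
  rcases Fin.eq_castSucc_or_eq_last k with ⟨k', rfl⟩ | rfl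
  · right
    refine ⟨⟨k', by simpa using hlabk, by simpa using hx1, by simpa using hy2, ?_⟩, ?_⟩
    · intro k'' hkk hl
      have := hafter k''.castSucc (Fin.castSucc_lt_castSucc_iff.mpr hkk) (by simpa using hl)
      simpa using this
    · intro hm
      have := hafter (Fin.last d) (Fin.castSucc_lt_last k') (by simpa using hm.symm)
      simpa using this
  · left
    exact ⟨by simpa using hlabk.symm, by simpa using hx1, by simpa using hy2⟩

lemma aCount_snoc {d : ℕ} (lab : Fin d → ℕ) (ℓ m : ℕ) (x : Fin d → ℕ) (ε : ℕ) :
    aCount (Fin.snoc lab ℓ) m (Fin.snoc x ε) =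
      aCount lab m x + (if m = ℓ ∧ ε = 2 then 1 else 0) := by
  unfold aCount
  rw [Finset.card_filter, Finset.card_filter, Fin.sum_univ_castSucc]
  congr 1
  · exact Finset.sum_congr rfl fun k _ => by simp
  · rcases eq_or_ne m ℓ with rfl | hne
    · simp
    · simp [hne, Ne.symm hne]

lemma aCount_one (ℓ m : ℕ) : aCount (fun _ : Fin 1 => ℓ) m ![1] = 0 := by
  simp [aCount]

lemma aCount_two (ℓ m : ℕ) :
    aCount (fun _ : Fin 1 => ℓ) m ![2] = if ℓ = m then 1 else 0 := by
  by_cases hm : ℓ = m <;> simp [aCount, hm]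

lemma step_core {d : ℕ} {lab : Fin d → ℕ} {v : Fin (d + 1) → Fin d → ℕ} {ℓ : ℕ}
    (IHv : ∀ a b : Fin (d + 1), ∀ m : ℕ, lexLt (v a) (v b) →
      aCount lab m (v a) ≤ aCount lab m (v b) ∧
        (Dcond lab m (v a) (v b) → aCount lab m (v a) < aCount lab m (v b)))
    (hsort : ∀ a b : Fin (d + 1), a < b → ltNode lab ℓ (v a) (v b))
    (a b : Fin (d + 1)) (ε δ : ℕ) (hε : ε = 1 ∨ ε = 2) (hδ : δ = 1 ∨ δ = 2)
    (hba : ε = 2 → δ = 1 → b ≤ a) (m : ℕ)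
    (hlt : lexLt (Fin.snoc (v a) ε) (Fin.snoc (v b) δ)) :
    aCount (Fin.snoc lab ℓ) m (Fin.snoc (v a) ε)
        ≤ aCount (Fin.snoc lab ℓ) m (Fin.snoc (v b) δ) ∧
      (Dcond (Fin.snoc lab ℓ) m (Fin.snoc (v a) ε) (Fin.snoc (v b) δ) →
        aCount (Fin.snoc lab ℓ) m (Fin.snoc (v a) ε)
          < aCount (Fin.snoc lab ℓ) m (Fin.snoc (v b) δ)) := by
  rw [aCount_snoc, aCount_snoc]
  rcases lexLt_snoc hlt with hvab | ⟨hvv, hεδ⟩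
  · have hne : v a ≠ v b := fun e => lexLt_irrefl (e ▸ hvab)
    obtain ⟨hle, hstr⟩ := IHv a b m hvab
    have key : (m = ℓ ∧ ε = 2) → ¬(m = ℓ ∧ δ = 2) →
        aCount lab m (v a) < aCount lab m (v b) := by
      rintro ⟨hm, hε2⟩ hnd
      have hδ1 : δ = 1 := by
        rcases hδ with h' | h'
        · exact h'
        · exact absurd ⟨hm, h'⟩ hnd
      have hab : b < a := lt_of_le_of_ne (hba hε2 hδ1) (fun e => hne (by rw [e]))
      rcases hsort b a hab with ⟨k₀, hk₀, hb2, ha1, hafter⟩ |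
        ⟨_, k₀, _, h1', h2', hbefore⟩
      · exact hstr ⟨k₀, by rw [hk₀, hm], ha1, hb2,
          fun k' hk' hl => (hafter k' hk' (by rw [hl, hm])).symm⟩
      · exact absurd hvab (fun hlt' =>
          lexLt_asymm hlt' ⟨k₀, hbefore, by rw [h1', h2']; norm_num⟩)
    constructor
    · by_cases c1 : m = ℓ ∧ ε = 2
      · by_cases c2 : m = ℓ ∧ δ = 2
        · rw [if_pos c1, if_pos c2]; omega
        · rw [if_pos c1, if_neg c2]
          have := key c1 c2; omega
      · rw [if_neg c1]
        exact le_trans (by omega) (Nat.add_le_add hle (Nat.zero_le _))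
    · intro hD
      rcases Dcond_snoc hD with ⟨hm, hε1, hδ2⟩ | ⟨hDold, hmεδ⟩
      · rw [if_neg (by rintro ⟨-, h2⟩; omega), if_pos ⟨hm, hδ2⟩]; omega
      · have hAB := hstr hDold
        by_cases hm : m = ℓ
        · have hed : ε = δ := hmεδ hm
          subst hed
          by_cases c : m = ℓ ∧ ε = 2
          · rw [if_pos c]; omega
          · rw [if_neg c]; omega
        · rw [if_neg (fun c => hm c.1)]; omega
  · obtain ⟨hε1, hδ2⟩ : ε = 1 ∧ δ = 2 := by
      rcases hε with h' | h' <;> rcases hδ with h'' | h'' <;> omega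
    subst hε1; subst hδ2
    rw [hvv]
    rw [if_neg (by rintro ⟨-, h2⟩; omega)]
    constructor
    · by_cases hm : m = ℓ
      · rw [if_pos ⟨hm, rfl⟩]; omega
      · rw [if_neg (fun c => hm c.1)]
    · intro hD
      rcases Dcond_snoc hD with ⟨hm, -, -⟩ | ⟨⟨k, -, h1', h2', -⟩, -⟩
      · rw [if_pos ⟨hm, rfl⟩]; omega
      · omega

theorem constructible_master {q d : ℕ} {lab : Fin d → ℕ} {u : Fin (d + 1) → Fin d → ℕ}
    (hR : Constructible q d lab u) :
    ∀ i j : Fin (d + 1), ∀ m : ℕ, lexLt (u i) (u j) →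
      aCount lab m (u i) ≤ aCount lab m (u j) ∧
        (Dcond lab m (u i) (u j) → aCount lab m (u i) < aCount lab m (u j)) := by
  induction hR with
  | base ℓ h1 hq =>
    intro i j m
    fin_cases i <;> fin_cases j <;> intro hlt
    · exact absurd hlt lexLt_irrefl
    · constructor
      · show aCount (fun _ : Fin 1 => ℓ) m ![1] ≤ aCount (fun _ : Fin 1 => ℓ) m ![2]
        rw [aCount_one]; omega
      · rintro ⟨k, hk, -, -, -⟩
        show aCount (fun _ : Fin 1 => ℓ) m ![1] < aCount (fun _ : Fin 1 => ℓ) m ![2]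
        rw [aCount_one, aCount_two, if_pos hk]; omega
    · exfalso
      obtain ⟨k₀, -, hk⟩ := hlt
      have hk' : (2 : ℕ) < 1 := by
        have e2 : (![![1], ![2]] : Fin 2 → Fin 1 → ℕ) 1 k₀ = 2 := by
          simp [Fin.eq_zero k₀]
        have e1 : (![![1], ![2]] : Fin 2 → Fin 1 → ℕ) 0 k₀ = 1 := by
          simp [Fin.eq_zero k₀]
        calc (2 : ℕ) = _ := e2.symm
          _ < _ := hk
          _ = 1 := e1
      omega
    · exact absurd hlt lexLt_irrefl
  | @step d lab u hR ℓ h1 hq v σ hv hsort h hh1 hh2 IH =>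
    have IHv : ∀ a b : Fin (d + 1), ∀ m : ℕ, lexLt (v a) (v b) →
        aCount lab m (v a) ≤ aCount lab m (v b) ∧
          (Dcond lab m (v a) (v b) → aCount lab m (v a) < aCount lab m (v b)) := by
      intro a b m hl
      rw [hv a, hv b] at hl ⊢
      exact IH (σ a) (σ b) m hl
    intro i j m
    by_cases hi : (i : ℕ) < h <;> by_cases hj2 : (j : ℕ) < h
    · simp only [dif_pos hi, dif_pos hj2]
      intro hlt
      exact step_core IHv hsort _ _ _ _ (Or.inl rfl) (Or.inl rfl)
        (by rintro h' -; exact absurd h' (by norm_num)) m hlt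
    · simp only [dif_pos hi, dif_neg hj2]
      intro hlt
      exact step_core IHv hsort _ _ _ _ (Or.inl rfl) (Or.inr rfl)
        (by rintro h' -; exact absurd h' (by norm_num)) m hlt
    · simp only [dif_neg hi, dif_pos hj2]
      intro hlt
      exact step_core IHv hsort _ _ _ _ (Or.inr rfl) (Or.inl rfl)
        (fun _ _ => Fin.mk_le_mk.mpr (by omega)) m hlt
    · simp only [dif_neg hi, dif_neg hj2]
      intro hlt
      exact step_core IHv hsort _ _ _ _ (Or.inr rfl) (Or.inr rfl)
        (by rintro - h'; exact absurd h' (by norm_num)) m hlt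

/-- If the tuples of a constructible special point data are listed in increasing
lexicographic order, then for every node label `ℓ ∈ {1,…,q}` the quantities
`a^ℓ_{u_j}(R)` are nondecreasing in `j`. -/
theorem constructible_aCount_mono {q d : ℕ} (hq : 1 ≤ q) (hd : 1 ≤ d)
    {lab : Fin d → ℕ} {u : Fin (d + 1) → Fin d → ℕ}
    (hR : Constructible q d lab u)
    (hlex : ∀ i j : Fin (d + 1), i < j → lexLt (u i) (u j))
    (ℓ : ℕ) (hℓ1 : 1 ≤ ℓ) (hℓq : ℓ ≤ q) :
    ∀ j : Fin d, aCount lab ℓ (u j.castSucc) ≤ aCount lab ℓ (u j.succ) := by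
  intro j
  exact (constructible_master hR j.castSucc j.succ ℓ
    (hlex j.castSucc j.succ (Fin.castSucc_lt_succ (i := j)))).1
end
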